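/- Let n ≥ 1 and let A be an n×n real matrix all of whose entries are strictly positive. Then there exists a real number λ₁ > 0 and a vector v with all entries strictly positive such that A·v = λ₁·v, and every complex eigenvalue μ of A (i.e. every root of the characteristic polynomial of A viewed as a complex matrix) with μ ≠ λ₁ satisfies |μ| < λ₁. -/

import Mathlib

open Finset in
lemma perron_align {n : ℕ} (f : Fin n → ℂ)
    (h : ‖∑ j, f j‖ = ∑ j, ‖f j‖) (j : Fin n) :
    (‖∑ i, f i‖ : ℂ) * f j = (∑ i, f i) * (‖f j‖ : ℂ) := by
  set s : ℂ := ∑ i, f i with hs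
  have hle : ∀ i ∈ univ, ((starRingEnd ℂ) s * f i).re ≤ ‖s‖ * ‖f i‖ := by
    intro i _
    calc ((starRingEnd ℂ) s * f i).re ≤ ‖(starRingEnd ℂ) s * f i‖ :=
          Complex.re_le_norm _
      _ = ‖s‖ * ‖f i‖ := by
          rw [norm_mul, Complex.norm_conj]
  have hsum : ∑ i, ((starRingEnd ℂ) s * f i).re = ∑ i, ‖s‖ * ‖f i‖ := by
    have : ∑ i, ((starRingEnd ℂ) s * f i).re = ((starRingEnd ℂ) s * s).re := by
      rw [hs, Finset.mul_sum]
      exact (Complex.re_sum _ _).symm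
    rw [this, ← Finset.mul_sum, ← h]
    have : (starRingEnd ℂ) s * s = (‖s‖ : ℂ) ^ 2 := by
      rw [mul_comm, Complex.mul_conj, Complex.normSq_eq_norm_sq]
      push_cast; ring
    rw [this]
    simp [sq]
  have heach := (Finset.sum_eq_sum_iff_of_le hle).mp hsum j (Finset.mem_univ j)
  -- heach : |s| * |f j| = (conj s * f j).re  (maybe direction)
  have him : (starRingEnd ℂ) s * f j = ((‖s‖ * ‖f j‖ : ℝ) : ℂ) := by
    have habs : ‖(starRingEnd ℂ) s * f j‖ = ‖s‖ * ‖f j‖ := by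
      rw [norm_mul, Complex.norm_conj]
    set w : ℂ := (starRingEnd ℂ) s * f j with hw
    have hre : w.re = ‖w‖ := by rw [habs, ← heach]
    have h1 : w.re ^ 2 + w.im ^ 2 = ‖w‖ ^ 2 := by
      rw [← Complex.normSq_eq_norm_sq, Complex.normSq_apply]; ring
    have him0 : w.im = 0 := by
      have h2 : w.im ^ 2 = 0 := by rw [hre] at h1; linarith
      exact pow_eq_zero_iff two_ne_zero |>.mp h2
    rw [habs] at hre
    exact Complex.ext (by simpa using hre) (by simpa using him0)
  rcases eq_or_ne s 0 with h0 | h0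
  · simp [h0]
  · have habs0 : (‖s‖ : ℂ) ≠ 0 := by
      simpa using (norm_ne_zero_iff.mpr h0)
    apply mul_left_cancel₀ habs0
    have := congrArg (fun z => s * z) him
    calc (‖s‖ : ℂ) * ((‖s‖ : ℂ) * f j)
        = ((starRingEnd ℂ) s * s) * f j := by
          rw [mul_comm ((starRingEnd ℂ) s) s, Complex.mul_conj, Complex.normSq_eq_norm_sq]
          push_cast; ring
      _ = s * ((starRingEnd ℂ) s * f j) := by ring
      _ = s * ((‖s‖ * ‖f j‖ : ℝ) : ℂ) := by rw [him]
      _ = (‖s‖ : ℂ) * (s * (‖f j‖ : ℂ)) := by push_cast; ring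


lemma perron_eval_charpoly {n : ℕ} (B : Matrix (Fin n) (Fin n) ℂ) (μ : ℂ) :
    B.charpoly.eval μ = (μ • (1 : Matrix (Fin n) (Fin n) ℂ) - B).det := by
  rw [Matrix.charpoly, ← Polynomial.coe_evalRingHom, RingHom.map_det]
  congr 1
  ext i j
  by_cases hij : i = j
  · subst hij
    simp [Matrix.charmatrix_apply_eq, Matrix.one_apply, Matrix.map_apply]
  · simp [Matrix.charmatrix_apply_ne _ _ _ hij, Matrix.one_apply, hij, Matrix.map_apply]

lemma perron_mem_spectrum_iff {n : ℕ} (B : Matrix (Fin n) (Fin n) ℂ) (μ : ℂ) :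
    μ ∈ spectrum ℂ B ↔ B.charpoly.IsRoot μ := by
  rw [spectrum.mem_iff, Polynomial.IsRoot.def, perron_eval_charpoly]
  rw [Algebra.algebraMap_eq_smul_one]
  constructor
  · intro h
    by_contra hdet
    exact h ((Matrix.isUnit_iff_isUnit_det _).mpr (isUnit_iff_ne_zero.mpr hdet))
  · intro h hu
    have := (Matrix.isUnit_iff_isUnit_det _).mp hu
    rw [h] at this
    exact (isUnit_iff_ne_zero.mp this) rfl

lemma perron_exists_eigenvector {n : ℕ} (B : Matrix (Fin n) (Fin n) ℂ) (μ : ℂ)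
    (h : B.charpoly.IsRoot μ) : ∃ x : Fin n → ℂ, x ≠ 0 ∧ B.mulVec x = μ • x := by
  have hdet : (μ • (1 : Matrix (Fin n) (Fin n) ℂ) - B).det = 0 := by
    rw [← perron_eval_charpoly]; exact h
  obtain ⟨x, hx0, hx⟩ := (Matrix.exists_mulVec_eq_zero_iff).mpr hdet
  refine ⟨x, hx0, ?_⟩
  have : (μ • (1 : Matrix (Fin n) (Fin n) ℂ) - B).mulVec x
      = μ • x - B.mulVec x := by
    rw [Matrix.sub_mulVec, Matrix.smul_mulVec, Matrix.one_mulVec]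
  rw [this] at hx
  linear_combination (norm := module) -hx


open Filter Finset
open scoped ENNReal NNReal

lemma perron_core {n : ℕ} (hn : 1 ≤ n) (A : Matrix (Fin n) (Fin n) ℝ)
    (hA : ∀ i j, 0 < A i j)
    (z : Fin n → ℝ) (hz : ∀ i, 0 < z i) (s : ℝ) (hs : 0 < s)
    (hsz : ∀ i, s * z i ≤ A.mulVec z i)
    (r : ℝ) (hr0 : 0 ≤ r)
    (hr : ∀ μ : ℂ, ((A.map (algebraMap ℝ ℂ)).charpoly).IsRoot μ → ‖μ‖ ≤ r) :
    s ≤ r := by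
  haveI : NeZero n := ⟨by omega⟩
  set B : Matrix (Fin n) (Fin n) ℂ := A.map (algebraMap ℝ ℂ) with hB
  -- powers bound
  have hApow_pos : ∀ k : ℕ, ∀ i, s ^ k * z i ≤ ((A ^ k).mulVec z) i := by
    intro k
    induction k with
    | zero => intro i; simp [Matrix.one_mulVec]
    | succ k ih =>
      intro i
      have hA1 : (A ^ (k + 1)).mulVec z = A.mulVec ((A ^ k).mulVec z) := by
        rw [pow_succ', ← Matrix.mulVec_mulVec]
      rw [hA1]
      have step1 : ∑ j, A i j * (s ^ k * z j) ≤ ∑ j, A i j * ((A ^ k).mulVec z) j := by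
        apply Finset.sum_le_sum
        intro j _
        exact mul_le_mul_of_nonneg_left (ih j) (hA i j).le
      calc s ^ (k + 1) * z i = s ^ k * (s * z i) := by ring
        _ ≤ s ^ k * (A.mulVec z i) := by
            exact mul_le_mul_of_nonneg_left (hsz i) (pow_nonneg hs.le k)
        _ = ∑ j, A i j * (s ^ k * z j) := by
            simp only [Matrix.mulVec, dotProduct, Finset.mul_sum]
            refine Finset.sum_congr rfl fun j _ => by ring
        _ ≤ ∑ j, A i j * ((A ^ k).mulVec z) j := step1
        _ = A.mulVec ((A ^ k).mulVec z) i := by simp [Matrix.mulVec, dotProduct]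
  -- the CLM
  let e : Matrix (Fin n) (Fin n) ℂ ≃ₐ[ℂ] (EuclideanSpace ℂ (Fin n) →L[ℂ] EuclideanSpace ℂ (Fin n)) :=
    AlgEquiv.ofRingEquiv (f := (Matrix.toEuclideanCLM (𝕜 := ℂ) (n := Fin n)).toRingEquiv)
      (fun x => by
        show Matrix.toEuclideanCLM (𝕜 := ℂ) (n := Fin n) (algebraMap ℂ _ x) = algebraMap ℂ _ x
        rw [Algebra.algebraMap_eq_smul_one, Algebra.algebraMap_eq_smul_one, map_smul, map_one])
  set T := e B with hT
  have happly : ∀ k : ℕ, ∀ w : Fin n → ℂ,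
      (T ^ k) ((WithLp.equiv 2 _).symm w) = (WithLp.equiv 2 _).symm ((B ^ k).mulVec w) := by
    intro k w
    have h1 : T ^ k = e (B ^ k) := (map_pow e B k).symm
    rw [h1]
    have : e (B ^ k) = Matrix.toEuclideanCLM (𝕜 := ℂ) (n := Fin n) (B ^ k) := rfl
    rw [this, WithLp.equiv_symm_apply, Matrix.toEuclideanCLM_toLp]
  have hBk : ∀ k : ℕ, B ^ k = (A ^ k).map (algebraMap ℝ ℂ) := by
    intro k
    have : B = (algebraMap ℝ ℂ).mapMatrix A := rfl
    rw [this, ← map_pow]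
    rfl
  -- the test vector
  set ζ : EuclideanSpace ℂ (Fin n) := (WithLp.equiv 2 _).symm (fun i => (z i : ℂ)) with hζ
  have hζapp : ∀ i, ζ i = (z i : ℂ) := fun i => rfl
  have hζnorm : ‖ζ‖ = Real.sqrt (∑ i, z i ^ 2) := by
    rw [EuclideanSpace.norm_eq]
    congr 1
    refine Finset.sum_congr rfl fun i _ => ?_
    rw [hζapp i, Complex.norm_real, Real.norm_eq_abs, sq_abs]
  have hζpos : 0 < ‖ζ‖ := by
    rw [hζnorm]
    apply Real.sqrt_pos.mpr
    apply Finset.sum_pos (fun i _ => pow_pos (hz i) 2) Finset.univ_nonempty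
  -- norm lower bound
  have hTnorm : ∀ k : ℕ, s ^ k ≤ ‖T ^ k‖ := by
    intro k
    have hmv : (B ^ k).mulVec (fun i => (z i : ℂ)) = fun i => (((A ^ k).mulVec z i : ℝ) : ℂ) := by
      rw [hBk k]
      funext i
      simp only [Matrix.mulVec, dotProduct, Matrix.map_apply,
        show ⇑(algebraMap ℝ ℂ) = Complex.ofReal from rfl]
      push_cast
      rfl
    have hval : (T ^ k) ζ = (WithLp.equiv 2 _).symm (fun i => (((A ^ k).mulVec z i : ℝ) : ℂ)) := by
      rw [hζ, happly k, hmv]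
    have hnormval : s ^ k * ‖ζ‖ ≤ ‖(T ^ k) ζ‖ := by
      rw [hval, hζnorm, EuclideanSpace.norm_eq]
      have : ∀ i, ‖((((A ^ k).mulVec z i : ℝ) : ℂ))‖ ^ 2 = ((A ^ k).mulVec z i) ^ 2 := by
        intro i; rw [Complex.norm_real, Real.norm_eq_abs, sq_abs]
      calc s ^ k * Real.sqrt (∑ i, z i ^ 2)
          = Real.sqrt ((s ^ k) ^ 2 * ∑ i, z i ^ 2) := by
            rw [Real.sqrt_mul (by positivity), Real.sqrt_sq (pow_nonneg hs.le k)]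
        _ = Real.sqrt (∑ i, (s ^ k * z i) ^ 2) := by
            rw [Finset.mul_sum]
            congr 1
            exact Finset.sum_congr rfl fun i _ => by ring
        _ ≤ Real.sqrt (∑ i, ((A ^ k).mulVec z i) ^ 2) := by
            apply Real.sqrt_le_sqrt
            apply Finset.sum_le_sum
            intro i _
            have h1 := hApow_pos k i
            have h2 : 0 ≤ s ^ k * z i := mul_nonneg (pow_nonneg hs.le k) (hz i).le
            nlinarith
        _ = Real.sqrt (∑ i, ‖(((WithLp.equiv 2 _).symm
              (fun i => (((A ^ k).mulVec z i : ℝ) : ℂ)) : EuclideanSpace ℂ (Fin n)) i)‖ ^ 2) := by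
            congr 1
            refine Finset.sum_congr rfl fun i _ => ?_
            rw [show (((WithLp.equiv 2 _).symm (fun i => (((A ^ k).mulVec z i : ℝ) : ℂ))
              : EuclideanSpace ℂ (Fin n)) i) = (((A ^ k).mulVec z i : ℝ) : ℂ) from rfl, this i]
    have hop := (T ^ k).le_opNorm ζ
    nlinarith
  -- Gelfand
  have hgel := spectrum.pow_nnnorm_pow_one_div_tendsto_nhds_spectralRadius T
  have hlower : ENNReal.ofReal s ≤ spectralRadius ℂ T := by
    refine ge_of_tendsto hgel ?_
    filter_upwards [eventually_ge_atTop 1] with k hk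
    have h1 : ENNReal.ofReal (s ^ k) ≤ (‖T ^ k‖₊ : ℝ≥0∞) := by
      rw [← ENNReal.ofReal_coe_nnreal, coe_nnnorm]
      exact ENNReal.ofReal_le_ofReal (hTnorm k)
    have h2 : (ENNReal.ofReal s) ^ k ≤ (‖T ^ k‖₊ : ℝ≥0∞) := by
      rwa [← ENNReal.ofReal_pow hs.le]
    have hk0 : (k : ℝ) ≠ 0 := Nat.cast_ne_zero.mpr (by omega)
    calc ENNReal.ofReal s
        = ((ENNReal.ofReal s) ^ k) ^ (1 / (k : ℝ)) := by
          have hkk : (k : ℝ) * (1 / (k : ℝ)) = 1 := by field_simp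
          rw [← ENNReal.rpow_natCast _ k, ← ENNReal.rpow_mul, hkk, ENNReal.rpow_one]
      _ ≤ (‖T ^ k‖₊ : ℝ≥0∞) ^ (1 / (k : ℝ)) :=
          ENNReal.rpow_le_rpow h2 (by positivity)
  have hupper : spectralRadius ℂ T ≤ ENNReal.ofReal r := by
    rw [spectralRadius]
    refine iSup₂_le fun μ hμ => ?_
    have hμB : μ ∈ spectrum ℂ B := by
      rwa [hT, AlgEquiv.spectrum_eq e B] at hμ
    have : B.charpoly.IsRoot μ := by
      rwa [← perron_mem_spectrum_iff]
    have h2 : ‖μ‖ ≤ r := hr μ this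
    rw [← ENNReal.ofReal_coe_nnreal, coe_nnnorm]
    exact ENNReal.ofReal_le_ofReal h2
  have := hlower.trans hupper
  rwa [ENNReal.ofReal_le_ofReal_iff hr0] at this

/-- Perron–Frobenius: a strictly positive real `n × n` matrix (with `n ≥ 1`) has a
positive eigenvalue `λ₁` with a strictly positive eigenvector, and every complex
eigenvalue `μ ≠ λ₁` satisfies `|μ| < λ₁`. -/
theorem positive_matrix_perron_eigenvalue_dominates
    (n : ℕ) (hn : 1 ≤ n) (A : Matrix (Fin n) (Fin n) ℝ)
    (hA : ∀ i j, 0 < A i j) :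
    ∃ lam : ℝ, 0 < lam ∧
      (∃ v : Fin n → ℝ, (∀ i, 0 < v i) ∧ A.mulVec v = lam • v) ∧
      (∀ μ : ℂ, (Matrix.charpoly (A.map (algebraMap ℝ ℂ))).IsRoot μ →
        μ ≠ (lam : ℂ) → ‖μ‖ < lam) := by
  haveI : NeZero n := ⟨by omega⟩
  set B : Matrix (Fin n) (Fin n) ℂ := A.map (algebraMap ℝ ℂ) with hB
  have hmonic : B.charpoly.Monic := B.charpoly_monic
  have hne : B.charpoly ≠ 0 := hmonic.ne_zero
  have hdeg : B.charpoly.natDegree = n := by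
    rw [Matrix.charpoly_natDegree_eq_dim]; simp
  have hcard : B.charpoly.roots.card = n := by
    have h := Polynomial.splits_iff_card_roots.mp
      (IsAlgClosed.splits B.charpoly)
    rw [hdeg] at h
    exact h
  have hroots_ne : B.charpoly.roots ≠ 0 := by
    intro h; rw [h] at hcard; simp at hcard; omega
  set F : Finset ℝ := B.charpoly.roots.toFinset.image (fun z : ℂ => ‖z‖) with hF
  have hFne : F.Nonempty := by
    obtain ⟨μ, hμ⟩ := Multiset.exists_mem_of_ne_zero hroots_ne
    exact ⟨‖μ‖, Finset.mem_image.mpr ⟨μ, Multiset.mem_toFinset.mpr hμ, rfl⟩⟩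
  set r : ℝ := F.max' hFne with hrdef
  have hroot_le : ∀ μ : ℂ, B.charpoly.IsRoot μ → ‖μ‖ ≤ r := by
    intro μ hμ
    apply Finset.le_max'
    exact Finset.mem_image.mpr
      ⟨μ, Multiset.mem_toFinset.mpr (Polynomial.mem_roots'.mpr ⟨hne, hμ⟩), rfl⟩
  have hrF : r ∈ F := F.max'_mem hFne
  obtain ⟨μ₀, hμ₀F, hμ₀abs⟩ := Finset.mem_image.mp hrF
  have hμ₀root : B.charpoly.IsRoot μ₀ :=
    (Polynomial.mem_roots'.mp (Multiset.mem_toFinset.mp hμ₀F)).2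
  have hr0 : 0 ≤ r := hμ₀abs ▸ norm_nonneg μ₀
  -- r > 0 via the core lemma with the all-ones vector
  have hrpos : 0 < r := by
    set s₀ : ℝ := Finset.univ.inf' Finset.univ_nonempty (fun i => ∑ j, A i j) with hs₀
    have hs₀pos : 0 < s₀ := by
      obtain ⟨i₂, -, hi₂⟩ :=
        Finset.exists_mem_eq_inf' Finset.univ_nonempty (fun i => ∑ j, A i j)
      rw [hs₀, hi₂]
      exact Finset.sum_pos (fun j _ => hA i₂ j) Finset.univ_nonempty
    have hineq : ∀ i, s₀ * (1 : ℝ) ≤ A.mulVec (fun _ => 1) i := by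
      intro i
      rw [mul_one]
      have h1 : A.mulVec (fun _ => 1) i = ∑ j, A i j := by
        simp [Matrix.mulVec, dotProduct]
      rw [h1]
      exact Finset.inf'_le _ (Finset.mem_univ i)
    have := perron_core hn A hA (fun _ => 1) (fun _ => one_pos) s₀ hs₀pos hineq r hr0 hroot_le
    linarith
  -- key step: any eigenvector of a maximal-modulus eigenvalue has positive abs, eigen for r
  have key : ∀ μ : ℂ, ‖μ‖ = r → ∀ x : Fin n → ℂ, x ≠ 0 → B.mulVec x = μ • x →
      (∀ i, 0 < ‖x i‖) ∧
        A.mulVec (fun i => ‖x i‖) = r • (fun i => ‖x i‖) := by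
    intro μ hμabs x hx0 heig
    set u : Fin n → ℝ := fun i => ‖x i‖ with hu
    have hu0 : ∀ i, 0 ≤ u i := fun i => norm_nonneg _
    obtain ⟨i₀, hi₀⟩ : ∃ i, x i ≠ 0 := Function.ne_iff.mp hx0
    have hui₀ : 0 < u i₀ := norm_pos_iff.mpr hi₀
    have hineq : ∀ i, r * u i ≤ A.mulVec u i := by
      intro i
      calc r * u i = ‖μ * x i‖ := by rw [norm_mul, hμabs]
        _ = ‖(B.mulVec x) i‖ := by rw [heig]; rfl
        _ ≤ ∑ j, ‖B i j * x j‖ := by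
            rw [show (B.mulVec x) i = ∑ j, B i j * x j from rfl]
            exact norm_sum_le _ _
        _ = A.mulVec u i := by
            rw [show A.mulVec u i = ∑ j, A i j * u j from rfl]
            refine Finset.sum_congr rfl fun j _ => ?_
            rw [show B i j * x j = ((A i j : ℝ) : ℂ) * x j from rfl, norm_mul,
              Complex.norm_real, Real.norm_eq_abs, abs_of_pos (hA i j)]
    have hAu_pos : ∀ i, 0 < A.mulVec u i := by
      intro i
      rw [show A.mulVec u i = ∑ j, A i j * u j from rfl]
      exact Finset.sum_pos' (fun j _ => mul_nonneg (hA i j).le (hu0 j))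
        ⟨i₀, Finset.mem_univ _, mul_pos (hA i i₀) hui₀⟩
    have heqAu : A.mulVec u = r • u := by
      by_contra hne'
      have hstrict : ∃ i₁, r * u i₁ < A.mulVec u i₁ := by
        by_contra hall
        push_neg at hall
        apply hne'
        funext i
        have h1 : A.mulVec u i ≤ r * u i := hall i
        have h2 := hineq i
        have : A.mulVec u i = r * u i := le_antisymm h1 h2
        rw [this]; rfl
      obtain ⟨i₁, hi₁⟩ := hstrict
      set z : Fin n → ℝ := A.mulVec u with hz
      have hzpos : ∀ i, 0 < z i := hAu_pos
      have hzstrict : ∀ i, r * z i < A.mulVec z i := by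
        intro i
        have hexp : A.mulVec z i - r * z i = ∑ j, A i j * (z j - r * u j) := by
          rw [show A.mulVec z i = ∑ j, A i j * z j from rfl,
            show z i = ∑ j, A i j * u j from rfl, Finset.mul_sum]
          rw [← Finset.sum_sub_distrib]
          refine Finset.sum_congr rfl fun j _ => ?_
          ring
        have hpos : 0 < ∑ j, A i j * (z j - r * u j) :=
          Finset.sum_pos' (fun j _ => mul_nonneg (hA i j).le (by linarith [hineq j]))
            ⟨i₁, Finset.mem_univ _, mul_pos (hA i i₁) (by linarith)⟩
        linarith
      set s : ℝ := Finset.univ.inf' Finset.univ_nonempty (fun i => A.mulVec z i / z i)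
        with hsdef
      have hsr : r < s := by
        obtain ⟨i₂, -, hi₂⟩ :=
          Finset.exists_mem_eq_inf' Finset.univ_nonempty (fun i => A.mulVec z i / z i)
        rw [hsdef, hi₂, lt_div_iff₀ (hzpos i₂)]
        linarith [hzstrict i₂]
      have hsineq : ∀ i, s * z i ≤ A.mulVec z i := by
        intro i
        have h1 : s ≤ A.mulVec z i / z i :=
          Finset.inf'_le _ (Finset.mem_univ i)
        rw [le_div_iff₀ (hzpos i)] at h1
        linarith
      have := perron_core hn A hA z hzpos s (hrpos.trans hsr) hsineq r hr0 hroot_le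
      linarith
    have hupos : ∀ i, 0 < u i := by
      intro i
      have h1 : r * u i = A.mulVec u i := by rw [heqAu]; rfl
      nlinarith [hAu_pos i, hu0 i]
    exact ⟨hupos, heqAu⟩
  -- existence of the positive eigenvector
  obtain ⟨x₀, hx₀ne, hx₀eig⟩ := perron_exists_eigenvector B μ₀ hμ₀root
  obtain ⟨hv_pos, hv_eig⟩ := key μ₀ hμ₀abs x₀ hx₀ne hx₀eig
  refine ⟨r, hrpos, ⟨fun i => ‖x₀ i‖, hv_pos, hv_eig⟩, ?_⟩
  -- dominance
  intro μ hμroot hμne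
  rcases lt_or_eq_of_le (hroot_le μ hμroot) with h | h
  · exact h
  · exfalso
    obtain ⟨x, hxne, hxeig⟩ := perron_exists_eigenvector B μ hμroot
    obtain ⟨hupos, heqAu⟩ := key μ h x hxne hxeig
    set u : Fin n → ℝ := fun i => ‖x i‖ with hu
    set i₀ : Fin n := ⟨0, hn⟩ with hi₀
    set f : Fin n → ℂ := fun j => ((A i₀ j : ℝ) : ℂ) * x j with hf
    have hBij : ∀ i j, B i j = ((A i j : ℝ) : ℂ) := fun i j => rfl
    have hsum_f : ∑ j, f j = μ * x i₀ := by
      have h1 := congrFun hxeig i₀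
      rw [show (B.mulVec x) i₀ = ∑ j, B i₀ j * x j from rfl] at h1
      rw [show (μ • x) i₀ = μ * x i₀ from rfl] at h1
      rw [← h1]
      rfl
    have habsf : ∀ j, ‖f j‖ = A i₀ j * u j := by
      intro j
      rw [hf, norm_mul, Complex.norm_real, Real.norm_eq_abs, abs_of_pos (hA i₀ j)]
    have habs_sum : ‖∑ j, f j‖ = ∑ j, ‖f j‖ := by
      rw [hsum_f, norm_mul, h]
      have h2 : ∑ j, ‖f j‖ = A.mulVec u i₀ := by
        rw [show A.mulVec u i₀ = ∑ j, A i₀ j * u j from rfl]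
        exact Finset.sum_congr rfl fun j _ => habsf j
      rw [h2, heqAu]
      rfl
    have halign := perron_align f habs_sum
    have hS : ‖∑ i, f i‖ = r * u i₀ := by rw [hsum_f, norm_mul, h]
    have hrui : (0:ℝ) < r * u i₀ := mul_pos hrpos (hupos i₀)
    have hSne : (∑ i, f i) ≠ 0 := by
      intro h0
      rw [h0, norm_zero] at hS
      linarith
    have hxj : ∀ j, ((r * u i₀ : ℝ) : ℂ) * x j = (∑ i, f i) * ((u j : ℝ) : ℂ) := by
      intro j
      have h1 := halign j
      rw [hS] at h1
      have h2 : ((‖f j‖ : ℝ) : ℂ) = ((A i₀ j : ℝ) : ℂ) * ((u j : ℝ) : ℂ) := by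
        rw [habsf j]
        push_cast
        ring
      rw [h2] at h1
      rw [show f j = ((A i₀ j : ℝ) : ℂ) * x j from rfl] at h1
      have hA0 : ((A i₀ j : ℝ) : ℂ) ≠ 0 := by
        exact_mod_cast (hA i₀ j).ne'
      apply mul_left_cancel₀ hA0
      linear_combination h1
    have hx0eq := hxj i₀
    rw [hsum_f] at hx0eq
    have hui0ne : ((u i₀ : ℝ) : ℂ) ≠ 0 := by exact_mod_cast (hupos i₀).ne'
    have hxi₀ne : x i₀ ≠ 0 := by
      intro h0
      have h3 := hupos i₀
      rw [h0, norm_zero] at h3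
      exact lt_irrefl _ h3
    apply hμne
    have hc : ((r * u i₀ : ℝ) : ℂ) = (r : ℂ) * ((u i₀ : ℝ) : ℂ) := by push_cast; ring
    rw [hc] at hx0eq
    have hzero : (μ - (r : ℂ)) * (x i₀ * ((u i₀ : ℝ) : ℂ)) = 0 := by
      linear_combination -hx0eq
    rcases mul_eq_zero.mp hzero with h1 | h1
    · exact sub_eq_zero.mp h1
    · exact absurd h1 (mul_ne_zero hxi₀ne hui0ne)
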